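/- arXiv:2506.09244 — 3 statements merged into one kernel-verified Lean document; each statement's English description precedes it below -/
import Mathlib

section
/- Let d ≥ 1 and let b : ℝ^d → ℝ^d be a locally integrable vector field such that for some δ < ∞ one has ∫_{ℝ^d} |b(y)| φ(y)² dy ≤ δ (∫_{ℝ^d} |∇φ|² dy)^{1/2} (∫_{ℝ^d} φ² dy)^{1/2} for every φ ∈ C_c^∞(ℝ^d). Then there exists a finite constant C, depending only on d and δ, such that ∫_{B_r(x)} |b(y)| dy ≤ C r^{d−1} for all r > 0 and x ∈ ℝ^d; that is, b belongs to the Morrey class M₁. -/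
open MeasureTheory

noncomputable section

lemma smoothTransition_deriv_bound :
    ∃ M : ℝ, 0 ≤ M ∧ ∀ t : ℝ, |deriv Real.smoothTransition t| ≤ M := by
  have hψ : ContDiff ℝ ((⊤:ℕ∞)) Real.smoothTransition := Real.smoothTransition.contDiff
  have hc : Continuous (deriv Real.smoothTransition) :=
    hψ.continuous_deriv (by exact_mod_cast le_top)
  have hcs : HasCompactSupport (deriv Real.smoothTransition) := by
    apply HasCompactSupport.intro (isCompact_Icc (a := (0:ℝ)) (b := 1))
    intro t ht
    simp only [Set.mem_Icc, not_and_or, not_le] at ht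
    rcases ht with ht | ht
    · have : Real.smoothTransition =ᶠ[nhds t] (fun _ => 0) := by
        filter_upwards [Iio_mem_nhds ht] with s hs
        exact Real.smoothTransition.zero_of_nonpos (le_of_lt hs)
      rw [this.deriv_eq, deriv_const]
    · have : Real.smoothTransition =ᶠ[nhds t] (fun _ => 1) := by
        filter_upwards [Ioi_mem_nhds ht] with s hs
        exact Real.smoothTransition.one_of_one_le (le_of_lt hs)
      rw [this.deriv_eq, deriv_const]
  obtain ⟨M, hM⟩ := hcs.exists_bound_of_continuous hc
  exact ⟨M, le_trans (abs_nonneg _) (hM 0), fun t => hM t⟩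

open Metric in
set_option maxHeartbeats 1000000 in
/-- A multiplicatively form-bounded vector field (with constant `δ`) belongs to the Morrey
class `M₁`: there is a finite constant `C`, depending only on `d` and `δ`, with
`∫_{B_r(x)} |b| ≤ C r^{d-1}` for all `r > 0` and `x`. -/
theorem multiplicative_form_bounded_implies_morrey_M1 (d : ℕ) (hd : 1 ≤ d) (δ : ℝ) :
    ∃ C : ℝ,
      ∀ b : EuclideanSpace ℝ (Fin d) → EuclideanSpace ℝ (Fin d),
        LocallyIntegrable b volume →
        (∀ φ : EuclideanSpace ℝ (Fin d) → ℝ, ContDiff ℝ (⊤ : ℕ∞) φ → HasCompactSupport φ →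
          ∫ y, ‖b y‖ * φ y ^ 2 ≤
            δ * (∫ y, ‖fderiv ℝ φ y‖ ^ 2) ^ (1/2 : ℝ) * (∫ y, φ y ^ 2) ^ (1/2 : ℝ)) →
        ∀ r : ℝ, 0 < r → ∀ x : EuclideanSpace ℝ (Fin d),
          ∫ y in Metric.ball x r, ‖b y‖ ≤ C * r ^ (d - 1) := by
  classical
  set E := EuclideanSpace ℝ (Fin d)
  obtain ⟨M, hM0, hM⟩ := smoothTransition_deriv_bound
  set κ : ℝ := (volume (ball (0 : E) 1)).toReal with hκdef
  have hκ0 : 0 ≤ κ := ENNReal.toReal_nonneg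
  refine ⟨|δ| * (4 * M / 3) * 2 ^ d * κ, ?_⟩
  intro b hb hform r hr x
  set ψ := Real.smoothTransition with hψdef
  have hψ : ContDiff ℝ ((⊤:ℕ∞)) ψ := Real.smoothTransition.contDiff
  set g : E → ℝ := fun y => (3 * r ^ 2)⁻¹ * (4 * r ^ 2 - ‖y - x‖ ^ 2) with hgdef
  set φ : E → ℝ := fun y => ψ (g y) with hφdef
  have hr2 : (0:ℝ) < 3 * r ^ 2 := by positivity
  -- smoothness
  have hg_smooth : ContDiff ℝ ((⊤:ℕ∞)) g := by
    exact contDiff_const.mul (contDiff_const.sub ((contDiff_id.sub contDiff_const).norm_sq ℝ))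
  have hφ_smooth : ContDiff ℝ ((⊤:ℕ∞)) φ := hψ.comp hg_smooth
  -- support
  have hφ0 : ∀ y ∉ closedBall x (2 * r), φ y = 0 := by
    intro y hy
    rw [mem_closedBall, not_le, dist_eq_norm] at hy
    apply Real.smoothTransition.zero_of_nonpos
    have h1 : (2 * r) ^ 2 ≤ ‖y - x‖ ^ 2 := by
      apply pow_le_pow_left₀ (by positivity) hy.le
    show (3 * r ^ 2)⁻¹ * (4 * r ^ 2 - ‖y - x‖ ^ 2) ≤ 0
    apply mul_nonpos_of_nonneg_of_nonpos (by positivity)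
    nlinarith
  have hφcs : HasCompactSupport φ := HasCompactSupport.intro (isCompact_closedBall x (2 * r)) hφ0
  -- equals 1 on ball x r
  have hφ1 : ∀ y ∈ ball x r, φ y = 1 := by
    intro y hy
    rw [mem_ball, dist_eq_norm] at hy
    apply Real.smoothTransition.one_of_one_le
    have h1 : ‖y - x‖ ^ 2 ≤ r ^ 2 := by
      apply pow_le_pow_left₀ (norm_nonneg _) hy.le
    show (1:ℝ) ≤ (3 * r ^ 2)⁻¹ * (4 * r ^ 2 - ‖y - x‖ ^ 2)
    rw [le_inv_mul_iff₀ hr2]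
    nlinarith
  have hφnonneg : ∀ y, 0 ≤ φ y := fun y => Real.smoothTransition.nonneg _
  have hφle1 : ∀ y, φ y ≤ 1 := fun y => Real.smoothTransition.le_one _
  -- derivative
  have hg' : ∀ y : E, HasFDerivAt g (((3 * r ^ 2)⁻¹ * (-2)) • innerSL ℝ (y - x)) y := by
    intro y
    have h1 : HasFDerivAt (fun z : E => ‖z - x‖ ^ 2) (2 • innerSL ℝ (y - x)) y := by
      have := ((hasFDerivAt_id y).sub (hasFDerivAt_const x y)).norm_sq
      simpa using this
    have h2 := ((hasFDerivAt_const (4 * r ^ 2) y).sub h1).const_mul ((3 * r ^ 2)⁻¹)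
    refine h2.congr_fderiv ?_
    ext v
    simp only [ContinuousLinearMap.smul_apply, ContinuousLinearMap.coe_smul', Pi.smul_apply,
      ContinuousLinearMap.sub_apply, ContinuousLinearMap.zero_apply, smul_eq_mul]
    ring
  have hφ' : ∀ y : E,
      fderiv ℝ φ y = (deriv ψ (g y) * ((3 * r ^ 2)⁻¹ * (-2))) • innerSL ℝ (y - x) := by
    intro y
    have hd1 : HasDerivAt ψ (deriv ψ (g y)) (g y) :=
      ((hψ.differentiable (by simp)) (g y)).hasDerivAt
    have h3 := (hd1.comp_hasFDerivAt y (hg' y)).fderiv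
    rw [show fderiv ℝ φ y = fderiv ℝ (ψ ∘ g) y from rfl, h3, smul_smul]
  have hnorm : ∀ y : E, ‖fderiv ℝ φ y‖ ≤ M * ((3 * r ^ 2)⁻¹ * 2) * ‖y - x‖ := by
    intro y
    rw [hφ' y, norm_smul, innerSL_apply_norm, Real.norm_eq_abs]
    apply mul_le_mul_of_nonneg_right ?_ (norm_nonneg _)
    rw [abs_mul]
    apply mul_le_mul (hM _) ?_ (abs_nonneg _) hM0
    rw [abs_mul, abs_neg, abs_two, abs_of_pos (inv_pos.2 hr2)]
  -- the key pointwise bound for ‖fderiv φ‖²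
  set cB : ℝ := 4 * M / (3 * r) with hcBdef
  have hcB0 : 0 ≤ cB := by positivity
  have hbound : ∀ y : E, ‖fderiv ℝ φ y‖ ^ 2
      ≤ Set.indicator (closedBall x (2 * r)) (fun _ => cB ^ 2) y := by
    intro y
    by_cases hy : y ∈ closedBall x (2 * r)
    · rw [Set.indicator_of_mem hy]
      have hyx : ‖y - x‖ ≤ 2 * r := by rwa [mem_closedBall, dist_eq_norm] at hy
      have h1 : ‖fderiv ℝ φ y‖ ≤ cB := by
        refine le_trans (hnorm y) ?_
        have h2 : M * ((3 * r ^ 2)⁻¹ * 2) * ‖y - x‖ ≤ M * ((3 * r ^ 2)⁻¹ * 2) * (2 * r) :=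
          mul_le_mul_of_nonneg_left hyx (by positivity)
        refine le_trans h2 (le_of_eq ?_)
        rw [hcBdef]
        field_simp
        ring
      exact pow_le_pow_left₀ (norm_nonneg _) h1 2
    · rw [Set.indicator_of_notMem hy]
      have hz : fderiv ℝ φ y = 0 := by
        have hev : φ =ᶠ[nhds y] fun _ => (0:ℝ) := by
          filter_upwards [(Metric.isClosed_closedBall (x := x) (ε := 2 * r)).isOpen_compl.mem_nhds hy]
            with z hz
          exact hφ0 z hz
        rw [hev.fderiv_eq]
        exact fderiv_const_apply 0
      rw [hz]
      simp
  -- volume abbreviation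
  set V : ℝ := (volume (closedBall x (2 * r))).toReal with hVdef
  have hV0 : 0 ≤ V := ENNReal.toReal_nonneg
  have hφcont : Continuous φ := hφ_smooth.continuous
  have hindint : ∀ c : ℝ, Integrable (Set.indicator (closedBall x (2 * r)) (fun _ => c)) volume := by
    intro c
    rw [integrable_indicator_iff measurableSet_closedBall]
    exact integrableOn_const measure_closedBall_lt_top.ne
  have hint1 : Integrable (fun y => ‖fderiv ℝ φ y‖ ^ 2) volume := by
    apply Continuous.integrable_of_hasCompactSupport
    · exact ((hφ_smooth.continuous_fderiv (by simp)).norm).pow 2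
    · exact (hφcs.fderiv ℝ).comp_left (g := fun L : E →L[ℝ] ℝ => ‖L‖ ^ 2) (by simp)
  have hA : ∫ y, ‖fderiv ℝ φ y‖ ^ 2 ≤ cB ^ 2 * V := by
    have h := integral_mono hint1 (hindint (cB ^ 2)) hbound
    rwa [integral_indicator_const _ measurableSet_closedBall, smul_eq_mul, mul_comm] at h
  have hB : ∫ y, φ y ^ 2 ≤ V := by
    have hmono : ∀ y, φ y ^ 2 ≤ Set.indicator (closedBall x (2 * r)) (fun _ => (1:ℝ)) y := by
      intro y
      by_cases hy : y ∈ closedBall x (2 * r)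
      · rw [Set.indicator_of_mem hy]
        nlinarith [hφnonneg y, hφle1 y]
      · rw [Set.indicator_of_notMem hy, hφ0 y hy]
        norm_num
    have hint2 : Integrable (fun y => φ y ^ 2) volume :=
      Continuous.integrable_of_hasCompactSupport (hφcont.pow 2)
        (hφcs.comp_left (g := fun t : ℝ => t ^ 2) (by simp))
    have h := integral_mono hint2 (hindint 1) hmono
    rwa [integral_indicator_const _ measurableSet_closedBall, smul_eq_mul, mul_one] at h
  have hA0 : 0 ≤ ∫ y, ‖fderiv ℝ φ y‖ ^ 2 := integral_nonneg fun y => by positivity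
  have hB0 : 0 ≤ ∫ y, φ y ^ 2 := integral_nonneg fun y => by positivity
  -- integrability of ‖b‖ φ²
  have hbnormint : IntegrableOn (fun y => ‖b y‖) (closedBall x (2 * r)) volume :=
    (hb.integrableOn_isCompact (isCompact_closedBall x (2 * r))).norm
  have hbφint : Integrable (fun y => ‖b y‖ * φ y ^ 2) volume := by
    have heq : (fun y => ‖b y‖ * φ y ^ 2)
        = Set.indicator (closedBall x (2 * r)) (fun y => ‖b y‖ * φ y ^ 2) := by
      ext y
      by_cases hy : y ∈ closedBall x (2 * r)
      · rw [Set.indicator_of_mem hy]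
      · rw [Set.indicator_of_notMem hy, hφ0 y hy]
        ring
    rw [heq, integrable_indicator_iff measurableSet_closedBall]
    apply hbnormint.mono'
    · exact (hb.aestronglyMeasurable.norm.mul ((hφcont.pow 2).aestronglyMeasurable)).restrict
    · filter_upwards with y
      rw [Real.norm_eq_abs, abs_of_nonneg (mul_nonneg (norm_nonneg _) (sq_nonneg _))]
      exact mul_le_of_le_one_right (norm_nonneg _) (by nlinarith [hφnonneg y, hφle1 y])
  -- main chain
  have hstep1 : ∫ y in ball x r, ‖b y‖ = ∫ y in ball x r, ‖b y‖ * φ y ^ 2 := by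
    apply setIntegral_congr_fun measurableSet_ball
    intro y hy
    show ‖b y‖ = ‖b y‖ * φ y ^ 2
    rw [hφ1 y hy]
    ring
  have hstep2 : ∫ y in ball x r, ‖b y‖ * φ y ^ 2 ≤ ∫ y, ‖b y‖ * φ y ^ 2 := by
    apply setIntegral_le_integral hbφint
    filter_upwards with y
    exact mul_nonneg (norm_nonneg _) (sq_nonneg _)
  have hstep3 := hform φ hφ_smooth hφcs
  have hAr : (∫ y, ‖fderiv ℝ φ y‖ ^ 2) ^ (1/2 : ℝ) ≤ cB * Real.sqrt V := by
    calc (∫ y, ‖fderiv ℝ φ y‖ ^ 2) ^ (1/2 : ℝ)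
        ≤ (cB ^ 2 * V) ^ (1/2 : ℝ) := Real.rpow_le_rpow hA0 hA (by norm_num)
      _ = cB * Real.sqrt V := by
          rw [← Real.sqrt_eq_rpow, Real.sqrt_mul (sq_nonneg cB), Real.sqrt_sq hcB0]
  have hBr : (∫ y, φ y ^ 2) ^ (1/2 : ℝ) ≤ Real.sqrt V := by
    calc (∫ y, φ y ^ 2) ^ (1/2 : ℝ)
        ≤ V ^ (1/2 : ℝ) := Real.rpow_le_rpow hB0 hB (by norm_num)
      _ = Real.sqrt V := (Real.sqrt_eq_rpow V).symm
  have hrp1 : (0:ℝ) ≤ (∫ y, ‖fderiv ℝ φ y‖ ^ 2) ^ (1/2 : ℝ) := Real.rpow_nonneg hA0 _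
  have hrp2 : (0:ℝ) ≤ (∫ y, φ y ^ 2) ^ (1/2 : ℝ) := Real.rpow_nonneg hB0 _
  have hstep4 : δ * (∫ y, ‖fderiv ℝ φ y‖ ^ 2) ^ (1/2 : ℝ) * (∫ y, φ y ^ 2) ^ (1/2 : ℝ)
      ≤ |δ| * (cB * Real.sqrt V) * Real.sqrt V := by
    apply mul_le_mul ?_ hBr hrp2
      (mul_nonneg (abs_nonneg _) (mul_nonneg hcB0 (Real.sqrt_nonneg _)))
    exact mul_le_mul (le_abs_self δ) hAr hrp1 (abs_nonneg _)
  have hsq : |δ| * (cB * Real.sqrt V) * Real.sqrt V = |δ| * cB * V := by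
    rw [show |δ| * (cB * Real.sqrt V) * Real.sqrt V
        = |δ| * cB * (Real.sqrt V * Real.sqrt V) by ring,
      Real.mul_self_sqrt hV0]
  have hVval : V = 2 ^ d * r ^ d * κ := by
    rw [hVdef, Measure.addHaar_closedBall volume x (by positivity : (0:ℝ) ≤ 2 * r),
      ENNReal.toReal_mul, ENNReal.toReal_ofReal (by positivity)]
    have hfr : Module.finrank ℝ E = d := finrank_euclideanSpace_fin
    rw [hfr, mul_pow, hκdef]
  have hfin : |δ| * cB * V = |δ| * (4 * M / 3) * 2 ^ d * κ * r ^ (d - 1) := by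
    rw [hVval, hcBdef]
    have hrd : r ^ d = r ^ (d - 1) * r := by
      rw [← pow_succ]
      congr 1
      omega
    rw [hrd]
    field_simp
  calc ∫ y in ball x r, ‖b y‖ = ∫ y in ball x r, ‖b y‖ * φ y ^ 2 := hstep1
    _ ≤ ∫ y, ‖b y‖ * φ y ^ 2 := hstep2
    _ ≤ δ * (∫ y, ‖fderiv ℝ φ y‖ ^ 2) ^ (1/2 : ℝ) * (∫ y, φ y ^ 2) ^ (1/2 : ℝ) := hstep3
    _ ≤ |δ| * (cB * Real.sqrt V) * Real.sqrt V := hstep4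
    _ = |δ| * cB * V := hsq
    _ = |δ| * (4 * M / 3) * 2 ^ d * κ * r ^ (d - 1) := hfin

end
end

section
/- Let d ≥ 1, σ > 0, ε₀ > 0, and let ρ(y) = (1 + σ|y|²)^{−(d+ε₀)/2}, ρ_x(y) = ρ(y − x). Let b : ℝ^d → ℝ^d be a measurable vector field with |b| ∈ L²_loc such that for some δ ≥ 0 and c ≥ 0, ∫_{ℝ^d} |b|² φ² dy ≤ δ ∫_{ℝ^d} |∇φ|² dy + c ∫_{ℝ^d} φ² dy for every bounded Lipschitz function φ : ℝ^d → ℝ with φ ∈ L²(ℝ^d) and |∇φ| ∈ L²(ℝ^d) (∇φ denoting the almost-everywhere defined gradient). Then for every x ∈ ℝ^d, ∫_{ℝ^d} |b(y)|² ρ_x(y) dy ≤ ( δ (d+ε₀)² σ / 16 + c ) ∫_{ℝ^d} ρ(y) dy < ∞. -/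
open MeasureTheory ENNReal

noncomputable section

/-- The weight `ρ(y) = (1 + σ|y|²)^{-(d+ε₀)/2}` on `ℝ^d`. -/
def rhoWeight (d : ℕ) (σ ε₀ : ℝ) (y : EuclideanSpace ℝ (Fin d)) : ℝ :=
  (1 + σ * ‖y‖ ^ 2) ^ (-(((d : ℝ) + ε₀) / 2))

/-- Test functions: bounded Lipschitz functions `φ` with `φ ∈ L²` and `|∇φ| ∈ L²`
(the gradient being the almost-everywhere defined one, realized via `fderiv`). -/
def IsTestFn {d : ℕ} (φ : EuclideanSpace ℝ (Fin d) → ℝ) : Prop :=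
  (∃ L : NNReal, LipschitzWith L φ) ∧ (∃ M : ℝ, ∀ y, |φ y| ≤ M) ∧
    Integrable (fun y => φ y ^ 2) ∧ Integrable (fun y => ‖fderiv ℝ φ y‖ ^ 2)

section Aux
open Real
namespace FB

variable {d : ℕ} {σ ε₀ : ℝ}

lemma base_pos (hσ : 0 < σ) (y : EuclideanSpace ℝ (Fin d)) : 0 < 1 + σ * ‖y‖ ^ 2 := by
  positivity

lemma rho_pos (hσ : 0 < σ) (y : EuclideanSpace ℝ (Fin d)) : 0 < rhoWeight d σ ε₀ y :=
  Real.rpow_pos_of_pos (base_pos hσ y) _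

lemma rho_le_one (hσ : 0 < σ) (hd : 0 ≤ (d:ℝ) + ε₀) (y : EuclideanSpace ℝ (Fin d)) :
    rhoWeight d σ ε₀ y ≤ 1 := by
  apply Real.rpow_le_one_of_one_le_of_nonpos
  · nlinarith [sq_nonneg ‖y‖]
  · simp only [neg_nonpos]; positivity

lemma rho_continuous (hσ : 0 < σ) : Continuous (rhoWeight d σ ε₀) := by
  apply Continuous.rpow_const
  · fun_prop
  · intro y; exact Or.inl (ne_of_gt (base_pos hσ y))

lemma rho_integrable (hd : 1 ≤ d) (hσ : 0 < σ) (hε : 0 < ε₀) :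
    Integrable (fun y => rhoWeight d σ ε₀ y) (volume : Measure (EuclideanSpace ℝ (Fin d))) := by
  have hnr : (Module.finrank ℝ (EuclideanSpace ℝ (Fin d)) : ℝ) < (d:ℝ) + ε₀ := by
    rw [finrank_euclideanSpace_fin]; linarith
  have h1 := integrable_rpow_neg_one_add_norm_sq (E := EuclideanSpace ℝ (Fin d))
    (μ := volume) hnr
  set m : ℝ := min 1 σ with hm
  have hm0 : 0 < m := lt_min one_pos hσ
  refine ((h1.const_mul (m ^ (-(((d:ℝ)+ε₀)/2)))).mono'
    ((rho_continuous hσ).aestronglyMeasurable) (Filter.Eventually.of_forall fun y => ?_))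
  have h2 : m * (1 + ‖y‖^2) ≤ 1 + σ * ‖y‖^2 := by
    have h3 : m ≤ 1 := min_le_left _ _
    have h4 : m ≤ σ := min_le_right _ _
    nlinarith [sq_nonneg ‖y‖]
  rw [Real.norm_eq_abs, abs_of_pos (rho_pos hσ y)]
  calc rhoWeight d σ ε₀ y ≤ (m * (1 + ‖y‖^2)) ^ (-(((d:ℝ)+ε₀)/2)) := by
        apply Real.rpow_le_rpow_of_nonpos (by positivity) h2
        simp only [neg_nonpos]; positivity
    _ = m ^ (-(((d:ℝ)+ε₀)/2)) * ((1:ℝ) + ‖y‖^2) ^ (-((d:ℝ)+ε₀)/2) := by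
        rw [Real.mul_rpow hm0.le (by positivity)]
        ring_nf


def phi (d : ℕ) (σ ε₀ : ℝ) (x : EuclideanSpace ℝ (Fin d)) (y : EuclideanSpace ℝ (Fin d)) : ℝ :=
  (1 + σ * ‖y - x‖ ^ 2) ^ (-(((d : ℝ) + ε₀) / 4))

lemma phi_pos (hσ : 0 < σ) (x y : EuclideanSpace ℝ (Fin d)) : 0 < phi d σ ε₀ x y :=
  Real.rpow_pos_of_pos (base_pos hσ (y - x)) _

lemma phi_le_one (hσ : 0 < σ) (hq : 0 ≤ (d:ℝ) + ε₀) (x y : EuclideanSpace ℝ (Fin d)) :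
    phi d σ ε₀ x y ≤ 1 := by
  apply Real.rpow_le_one_of_one_le_of_nonpos
  · nlinarith [sq_nonneg ‖y - x‖]
  · simp only [neg_nonpos]; positivity

lemma phi_sq (hσ : 0 < σ) (x y : EuclideanSpace ℝ (Fin d)) :
    phi d σ ε₀ x y ^ 2 = rhoWeight d σ ε₀ (y - x) := by
  unfold phi rhoWeight
  rw [sq, ← Real.rpow_add (base_pos hσ (y - x))]
  ring_nf

lemma phi_hasFDerivAt (hσ : 0 < σ) (x y : EuclideanSpace ℝ (Fin d)) :
    HasFDerivAt (phi d σ ε₀ x)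
      ((((-(((d:ℝ)+ε₀)/4)) * (1 + σ * ‖y - x‖^2) ^ ((-(((d:ℝ)+ε₀)/4)) - 1)) •
        (σ • ((2:ℕ) • (innerSL ℝ (y - x))))) : EuclideanSpace ℝ (Fin d) →L[ℝ] ℝ) y := by
  have h1 : HasFDerivAt (fun y : EuclideanSpace ℝ (Fin d) => ‖y - x‖ ^ 2)
      ((2:ℕ) • (innerSL ℝ (y - x))) y := by
    simpa using ((hasFDerivAt_id y).sub_const x).norm_sq
  have h2 : HasFDerivAt (fun y : EuclideanSpace ℝ (Fin d) => 1 + σ * ‖y - x‖ ^ 2)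
      (σ • ((2:ℕ) • (innerSL ℝ (y - x)))) y := (h1.const_mul σ).const_add 1
  exact h2.rpow_const (Or.inl (ne_of_gt (base_pos hσ (y - x))))

lemma phi_differentiable (hσ : 0 < σ) (x : EuclideanSpace ℝ (Fin d)) :
    Differentiable ℝ (phi d σ ε₀ x) :=
  fun y => (phi_hasFDerivAt hσ x y).differentiableAt

lemma norm_fderiv_phi (hσ : 0 < σ) (hq : 0 ≤ (d:ℝ) + ε₀) (x y : EuclideanSpace ℝ (Fin d)) :
    ‖fderiv ℝ (phi d σ ε₀ x) y‖
      = (((d:ℝ)+ε₀)/4) * ((1 + σ * ‖y - x‖^2) ^ ((-(((d:ℝ)+ε₀)/4)) - 1)) * (σ * (2 * ‖y - x‖)) := by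
  rw [(phi_hasFDerivAt hσ x y).fderiv]
  have h2 : ((2:ℕ) • (innerSL ℝ (y - x))) = (2:ℝ) • (innerSL ℝ (y - x)) := by
    rw [two_smul, two_smul]
  rw [h2, norm_smul, norm_smul, norm_smul, innerSL_apply_norm]
  have hb := base_pos hσ (y - x)
  rw [Real.norm_eq_abs, Real.norm_eq_abs, Real.norm_eq_abs, abs_mul, abs_of_pos
    (Real.rpow_pos_of_pos hb _), abs_of_pos hσ, abs_of_nonneg (by norm_num : (0:ℝ) ≤ 2)]
  rw [abs_of_nonpos (by simp only [neg_nonpos]; positivity)]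
  ring

lemma fderiv_phi_sq_le (hσ : 0 < σ) (hq : 0 ≤ (d:ℝ) + ε₀) (x y : EuclideanSpace ℝ (Fin d)) :
    ‖fderiv ℝ (phi d σ ε₀ x) y‖ ^ 2
      ≤ (((d:ℝ)+ε₀)^2 * σ / 16) * rhoWeight d σ ε₀ (y - x) := by
  rw [norm_fderiv_phi hσ hq x y, ← phi_sq hσ x y]
  set q := (d:ℝ) + ε₀
  set r := ‖y - x‖ with hr
  have hr0 : 0 ≤ r := norm_nonneg _
  have hu : (0:ℝ) < 1 + σ * r ^ 2 := by positivity
  set u := 1 + σ * r ^ 2 with hudef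
  have hsplit : u ^ ((-(q/4)) - 1) = u ^ (-(q/4)) * u⁻¹ := by
    rw [sub_eq_add_neg, Real.rpow_add hu, Real.rpow_neg_one]
  have ha : phi d σ ε₀ x y = u ^ (-(q/4)) := rfl
  rw [hsplit, ha]
  set a := u ^ (-(q/4)) with hadef
  have ha0 : 0 < a := Real.rpow_pos_of_pos hu _
  have key : (σ * (2 * r) * u⁻¹) ^ 2 ≤ σ := by
    have h4 : (σ * (2 * r)) ^ 2 ≤ σ * u ^ 2 := by
      rw [hudef]; nlinarith [mul_nonneg hσ.le (sq_nonneg (1 - σ * r^2))]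
    calc (σ * (2 * r) * u⁻¹) ^ 2 = (σ * (2*r))^2 / u^2 := by
          rw [mul_pow]; rw [div_eq_mul_inv, inv_pow]
      _ ≤ σ := by
          rw [div_le_iff₀ (by positivity)]
          nlinarith
  calc (q/4 * (a * u⁻¹) * (σ * (2 * r))) ^ 2
      = (q/4)^2 * a^2 * ((σ * (2 * r) * u⁻¹) ^ 2) := by ring
    _ ≤ (q/4)^2 * a^2 * σ := by
        apply mul_le_mul_of_nonneg_left key (by positivity)
    _ = q^2 * σ / 16 * a^2 := by ring

end FB

namespace FB2
open FB

variable {d : ℕ} {σ ε₀ : ℝ}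

lemma phi_continuous (hσ : 0 < σ) (x : EuclideanSpace ℝ (Fin d)) :
    Continuous (phi d σ ε₀ x) := (phi_differentiable hσ x).continuous

lemma rho_le_one' (hσ : 0 < σ) (hq : 0 ≤ (d:ℝ) + ε₀) (y : EuclideanSpace ℝ (Fin d)) :
    rhoWeight d σ ε₀ y ≤ 1 := by
  apply Real.rpow_le_one_of_one_le_of_nonpos
  · nlinarith [sq_nonneg ‖y‖]
  · simp only [neg_nonpos]; positivity

lemma norm_fderiv_phi_le (hσ : 0 < σ) (hq : 0 ≤ (d:ℝ) + ε₀) (x y : EuclideanSpace ℝ (Fin d)) :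
    ‖fderiv ℝ (phi d σ ε₀ x) y‖ ≤ Real.sqrt (((d:ℝ)+ε₀)^2 * σ / 16) := by
  have h1 := fderiv_phi_sq_le hσ hq x y
  have h2 : rhoWeight d σ ε₀ (y - x) ≤ 1 := rho_le_one' hσ hq _
  have h3 : ‖fderiv ℝ (phi d σ ε₀ x) y‖ ^ 2 ≤ ((d:ℝ)+ε₀)^2 * σ / 16 := by
    calc _ ≤ (((d:ℝ)+ε₀)^2 * σ / 16) * rhoWeight d σ ε₀ (y - x) := h1
      _ ≤ _ := mul_le_of_le_one_right (by positivity) h2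
  exact (Real.le_sqrt (norm_nonneg _) (by positivity)).mpr h3

lemma phi_lipschitz (hσ : 0 < σ) (hq : 0 ≤ (d:ℝ) + ε₀) (x : EuclideanSpace ℝ (Fin d)) :
    LipschitzWith (Real.sqrt (((d:ℝ)+ε₀)^2 * σ / 16)).toNNReal (phi d σ ε₀ x) := by
  apply lipschitzWith_of_nnnorm_fderiv_le (phi_differentiable hσ x)
  intro y
  rw [← norm_toNNReal]
  exact Real.toNNReal_mono (norm_fderiv_phi_le hσ hq x y)

end FB2

namespace FB3
open FB FB2

variable {d : ℕ} {σ ε₀ : ℝ}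

lemma level_null (hd : 1 ≤ d) (hσ : 0 < σ) (hq : 0 < (d:ℝ) + ε₀)
    (x : EuclideanSpace ℝ (Fin d)) (ε : ℝ) :
    volume {y : EuclideanSpace ℝ (Fin d) | phi d σ ε₀ x y = ε} = 0 := by
  haveI : Nonempty (Fin d) := ⟨⟨0, hd⟩⟩
  haveI : Nontrivial (EuclideanSpace ℝ (Fin d)) := inferInstance
  by_cases h : ∃ y₀, phi d σ ε₀ x y₀ = ε
  · obtain ⟨y₀, hy₀⟩ := h
    have hβ : -(((d:ℝ)+ε₀)/4) ≠ 0 := ne_of_lt (by linarith)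
    have hsub : {y : EuclideanSpace ℝ (Fin d) | phi d σ ε₀ x y = ε}
        ⊆ Metric.sphere x ‖y₀ - x‖ := by
      intro y hy
      simp only [Set.mem_setOf_eq] at hy
      have e0 : phi d σ ε₀ x y = phi d σ ε₀ x y₀ := by rw [hy, hy₀]
      have e1 : (1 + σ * ‖y - x‖^2) = (1 + σ * ‖y₀ - x‖^2) := by
        have e2 := congrArg (fun t : ℝ => t ^ (-(((d:ℝ)+ε₀)/4))⁻¹) e0
        simp only [phi] at e2
        rwa [Real.rpow_rpow_inv (base_pos hσ (y - x)).le hβ,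
          Real.rpow_rpow_inv (base_pos hσ (y₀ - x)).le hβ] at e2
      have e3 : ‖y - x‖^2 = ‖y₀ - x‖^2 := by
        have := mul_left_cancel₀ (ne_of_gt hσ) (by linarith : σ * ‖y - x‖^2 = σ * ‖y₀ - x‖^2)
        exact this
      have e4 : ‖y - x‖ = ‖y₀ - x‖ := by
        have := congrArg Real.sqrt e3
        rwa [Real.sqrt_sq (norm_nonneg _), Real.sqrt_sq (norm_nonneg _)] at this
      simpa [Metric.mem_sphere, dist_eq_norm] using e4
    exact measure_mono_null hsub ((volume : Measure (EuclideanSpace ℝ (Fin d))).addHaar_sphere x _)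
  · push_neg at h
    have : {y : EuclideanSpace ℝ (Fin d) | phi d σ ε₀ x y = ε} = ∅ := by
      ext y; simp [h y]
    simp [this]

lemma fderiv_psi_le_ae (hd : 1 ≤ d) (hσ : 0 < σ) (hq : 0 < (d:ℝ) + ε₀)
    (x : EuclideanSpace ℝ (Fin d)) (ε : ℝ) :
    ∀ᵐ y : EuclideanSpace ℝ (Fin d),
      ‖fderiv ℝ (fun z => max (phi d σ ε₀ x z - ε) 0) y‖ ≤ ‖fderiv ℝ (phi d σ ε₀ x) y‖ := by
  have hnull : ∀ᵐ y : EuclideanSpace ℝ (Fin d), phi d σ ε₀ x y ≠ ε := by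
    rw [ae_iff]
    simpa using level_null hd hσ hq x ε
  filter_upwards [hnull] with y hy
  rcases lt_or_gt_of_ne hy with h | h
  · have hev : (fun z => max (phi d σ ε₀ x z - ε) 0) =ᶠ[nhds y] (fun _ => (0:ℝ)) := by
      have hop : IsOpen {z : EuclideanSpace ℝ (Fin d) | phi d σ ε₀ x z < ε} :=
        isOpen_lt (phi_continuous hσ x) continuous_const
      filter_upwards [hop.mem_nhds h] with z hz
      show max (phi d σ ε₀ x z - ε) 0 = 0
      exact max_eq_right (by linarith)
    rw [hev.fderiv_eq]
    simp
  · have hev : (fun z => max (phi d σ ε₀ x z - ε) 0) =ᶠ[nhds y]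
        (fun z => phi d σ ε₀ x z - ε) := by
      have hop : IsOpen {z : EuclideanSpace ℝ (Fin d) | ε < phi d σ ε₀ x z} :=
        isOpen_lt continuous_const (phi_continuous hσ x)
      filter_upwards [hop.mem_nhds h] with z hz
      show max (phi d σ ε₀ x z - ε) 0 = phi d σ ε₀ x z - ε
      exact max_eq_left (by linarith)
    rw [hev.fderiv_eq, fderiv_sub_const]

lemma psi_support (hσ : 0 < σ) (hq : 0 < (d:ℝ) + ε₀)
    (x : EuclideanSpace ℝ (Fin d)) {ε : ℝ} (hε' : 0 < ε) (y : EuclideanSpace ℝ (Fin d))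
    (hy : max (phi d σ ε₀ x y - ε) 0 ≠ 0) :
    y ∈ Metric.closedBall x (Real.sqrt ((ε⁻¹ ^ (((d:ℝ)+ε₀)/4)⁻¹) / σ)) := by
  set β := ((d:ℝ)+ε₀)/4 with hβdef
  have hβ : 0 < β := by positivity
  have h1 : ε < phi d σ ε₀ x y := by
    by_contra hcon
    push_neg at hcon
    exact hy (max_eq_right (by linarith))
  have hu : (0:ℝ) < 1 + σ * ‖y - x‖^2 := base_pos hσ (y - x)
  set u := 1 + σ * ‖y - x‖^2 with hudef
  have h2 : u ^ β < ε⁻¹ := by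
    have h3 : phi d σ ε₀ x y = (u ^ β)⁻¹ := by
      rw [show phi d σ ε₀ x y = u ^ (-β) from rfl, Real.rpow_neg hu.le]
    rw [h3] at h1
    have hub : 0 < u ^ β := Real.rpow_pos_of_pos hu _
    exact (lt_inv_comm₀ hub hε').mpr h1
  have h4 : u ≤ ε⁻¹ ^ β⁻¹ := by
    have := Real.rpow_le_rpow (Real.rpow_nonneg hu.le β) h2.le (inv_nonneg.mpr hβ.le)
    rwa [Real.rpow_rpow_inv hu.le (ne_of_gt hβ)] at this
  have h5 : ‖y - x‖^2 ≤ ε⁻¹ ^ β⁻¹ / σ := by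
    rw [le_div_iff₀ hσ]
    rw [hudef] at h4
    nlinarith
  rw [Metric.mem_closedBall, dist_eq_norm]
  exact (Real.le_sqrt (norm_nonneg _) (by positivity)).mpr h5

end FB3

namespace FB4
open FB FB2 FB3

variable {d : ℕ} {σ ε₀ : ℝ}

lemma psi_continuous (hσ : 0 < σ) (x : EuclideanSpace ℝ (Fin d)) (ε : ℝ) :
    Continuous (fun z => max (phi d σ ε₀ x z - ε) 0) :=
  ((phi_continuous hσ x).sub continuous_const).max continuous_const

lemma psi_nonneg (x : EuclideanSpace ℝ (Fin d)) (ε : ℝ) (y : EuclideanSpace ℝ (Fin d)) :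
    0 ≤ max (phi d σ ε₀ x y - ε) 0 := le_max_right _ _

lemma psi_le_phi (hσ : 0 < σ) (x : EuclideanSpace ℝ (Fin d)) {ε : ℝ} (hε' : 0 ≤ ε)
    (y : EuclideanSpace ℝ (Fin d)) :
    max (phi d σ ε₀ x y - ε) 0 ≤ phi d σ ε₀ x y :=
  max_le (by linarith) (phi_pos hσ x y).le

lemma psi_sq_le_rho (hσ : 0 < σ) (x : EuclideanSpace ℝ (Fin d)) {ε : ℝ} (hε' : 0 ≤ ε)
    (y : EuclideanSpace ℝ (Fin d)) :
    max (phi d σ ε₀ x y - ε) 0 ^ 2 ≤ rhoWeight d σ ε₀ (y - x) := by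
  rw [← phi_sq hσ x y]
  exact pow_le_pow_left₀ (psi_nonneg x ε y) (psi_le_phi hσ x hε' y) 2

lemma rho_comp_integrable (hd : 1 ≤ d) (hσ : 0 < σ) (hε : 0 < ε₀)
    (x : EuclideanSpace ℝ (Fin d)) :
    Integrable (fun y => rhoWeight d σ ε₀ (y - x))
      (volume : Measure (EuclideanSpace ℝ (Fin d))) :=
  (rho_integrable hd hσ hε).comp_sub_right x

lemma psi_testfn (hd : 1 ≤ d) (hσ : 0 < σ) (hε : 0 < ε₀)
    (x : EuclideanSpace ℝ (Fin d)) {ε : ℝ} (hε' : 0 < ε) :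
    ((∃ L : NNReal, LipschitzWith L (fun z => max (phi d σ ε₀ x z - ε) 0)) ∧
      (∃ M : ℝ, ∀ y, |max (phi d σ ε₀ x y - ε) 0| ≤ M) ∧
      Integrable (fun y => max (phi d σ ε₀ x y - ε) 0 ^ 2) ∧
      Integrable (fun y => ‖fderiv ℝ (fun z => max (phi d σ ε₀ x z - ε) 0) y‖ ^ 2)) := by
  have hq : 0 < (d:ℝ) + ε₀ := by
    have : (1:ℝ) ≤ (d:ℝ) := by exact_mod_cast hd
    linarith
  refine ⟨?_, ?_, ?_, ?_⟩
  · refine ⟨(Real.sqrt (((d:ℝ)+ε₀)^2 * σ / 16)).toNNReal, ?_⟩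
    have h1 : LipschitzWith (Real.sqrt (((d:ℝ)+ε₀)^2 * σ / 16)).toNNReal
        (fun z => phi d σ ε₀ x z - ε) := by
      intro a b
      rw [edist_sub_right]
      exact phi_lipschitz hσ hq.le x a b
    exact h1.max_const 0
  · exact ⟨1, fun y => by
      rw [abs_of_nonneg (psi_nonneg x ε y)]
      exact (psi_le_phi hσ x hε'.le y).trans (phi_le_one hσ hq.le x y)⟩
  · refine (rho_comp_integrable hd hσ hε x).mono'
      (((psi_continuous hσ x ε).pow 2).aestronglyMeasurable)
      (Filter.Eventually.of_forall fun y => ?_)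
    rw [Real.norm_eq_abs, abs_of_nonneg (by positivity)]
    exact psi_sq_le_rho hσ x hε'.le y
  · refine (((rho_comp_integrable hd hσ hε x).const_mul (((d:ℝ)+ε₀)^2 * σ / 16)).mono'
      ((measurable_fderiv ℝ _).norm.pow_const 2).aestronglyMeasurable ?_)
    filter_upwards [fderiv_psi_le_ae hd hσ hq x ε] with y hy
    rw [Real.norm_eq_abs, abs_of_nonneg (by positivity)]
    calc ‖fderiv ℝ (fun z => max (phi d σ ε₀ x z - ε) 0) y‖ ^ 2
        ≤ ‖fderiv ℝ (phi d σ ε₀ x) y‖ ^ 2 := pow_le_pow_left₀ (norm_nonneg _) hy 2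
      _ ≤ ((d:ℝ)+ε₀)^2 * σ / 16 * rhoWeight d σ ε₀ (y - x) := fderiv_phi_sq_le hσ hq.le x y

end FB4

namespace FB5
open FB FB2 FB3 FB4

variable {d : ℕ} {σ ε₀ : ℝ}

lemma b_psi_integrable (hd : 1 ≤ d) (hσ : 0 < σ) (hε : 0 < ε₀)
    (b : EuclideanSpace ℝ (Fin d) → EuclideanSpace ℝ (Fin d))
    (hbloc : LocallyIntegrable (fun y => ‖b y‖ ^ 2) volume)
    (x : EuclideanSpace ℝ (Fin d)) {ε : ℝ} (hε' : 0 < ε) :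
    Integrable (fun y => ‖b y‖ ^ 2 * max (phi d σ ε₀ x y - ε) 0 ^ 2) := by
  have hq : 0 < (d:ℝ) + ε₀ := by
    have : (1:ℝ) ≤ (d:ℝ) := by exact_mod_cast hd
    linarith
  set R := Real.sqrt ((ε⁻¹ ^ (((d:ℝ)+ε₀)/4)⁻¹) / σ) with hR
  have hKc : IsCompact (Metric.closedBall x R) := isCompact_closedBall x R
  have hdom : Integrable ((Metric.closedBall x R).indicator (fun y => ‖b y‖ ^ 2)) := by
    exact (hbloc.integrableOn_isCompact hKc).integrable_indicator Metric.isClosed_closedBall.measurableSet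
  refine hdom.mono' (hbloc.aestronglyMeasurable.mul
      ((psi_continuous hσ x ε).pow 2).aestronglyMeasurable)
    (Filter.Eventually.of_forall fun y => ?_)
  rw [Real.norm_eq_abs, abs_of_nonneg (by positivity)]
  by_cases hy : max (phi d σ ε₀ x y - ε) 0 = 0
  · rw [hy]
    simpa using Set.indicator_nonneg (fun z _ => (by positivity : (0:ℝ) ≤ ‖b z‖^2)) y
  · have hmem := psi_support hσ hq x hε' y hy
    rw [Set.indicator_of_mem hmem]
    have h1 : max (phi d σ ε₀ x y - ε) 0 ^ 2 ≤ 1 := by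
      have := (psi_le_phi hσ x hε'.le y).trans (phi_le_one hσ hq.le x y)
      nlinarith [psi_nonneg (σ := σ) (ε₀ := ε₀) x ε y]
    nlinarith [sq_nonneg ‖b y‖, mul_le_of_le_one_right (sq_nonneg ‖b y‖) h1]

lemma key_bound (hd : 1 ≤ d) (hσ : 0 < σ) (hε : 0 < ε₀)
    (δ c : ℝ) (hδ : 0 ≤ δ) (hc : 0 ≤ c)
    (b : EuclideanSpace ℝ (Fin d) → EuclideanSpace ℝ (Fin d))
    (hbloc : LocallyIntegrable (fun y => ‖b y‖ ^ 2) volume)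
    (hfb : ∀ φ : EuclideanSpace ℝ (Fin d) → ℝ,
      ((∃ L : NNReal, LipschitzWith L φ) ∧ (∃ M : ℝ, ∀ y, |φ y| ≤ M) ∧
        Integrable (fun y => φ y ^ 2) ∧ Integrable (fun y => ‖fderiv ℝ φ y‖ ^ 2)) →
      ∫ y, ‖b y‖ ^ 2 * φ y ^ 2 ≤
        δ * ∫ y, ‖fderiv ℝ φ y‖ ^ 2 + c * ∫ y, φ y ^ 2)
    (x : EuclideanSpace ℝ (Fin d)) {ε : ℝ} (hε' : 0 < ε) :
    ∫ y, ‖b y‖ ^ 2 * max (phi d σ ε₀ x y - ε) 0 ^ 2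
      ≤ (δ * ((d : ℝ) + ε₀) ^ 2 * σ / 16 + c) * ∫ y, rhoWeight d σ ε₀ y := by
  have hq : 0 < (d:ℝ) + ε₀ := by
    have : (1:ℝ) ≤ (d:ℝ) := by exact_mod_cast hd
    linarith
  obtain ⟨hlip, hbdd, hint2, hintd⟩ := psi_testfn hd hσ hε x hε'
  have h0 := hfb _ ⟨hlip, hbdd, hint2, hintd⟩
  have htrans : ∫ y, rhoWeight d σ ε₀ (y - x) = ∫ y, rhoWeight d σ ε₀ y :=
    integral_sub_right_eq_self (fun y => rhoWeight d σ ε₀ y) x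
  have hrhoint : 0 ≤ ∫ y, rhoWeight d σ ε₀ y :=
    integral_nonneg fun y => (rho_pos hσ y).le
  have hgrad : ∫ y, ‖fderiv ℝ (fun z => max (phi d σ ε₀ x z - ε) 0) y‖ ^ 2
      ≤ (((d:ℝ)+ε₀)^2 * σ / 16) * ∫ y, rhoWeight d σ ε₀ y := by
    have h1 : ∫ y, ‖fderiv ℝ (fun z => max (phi d σ ε₀ x z - ε) 0) y‖ ^ 2
        ≤ ∫ y, (((d:ℝ)+ε₀)^2 * σ / 16) * rhoWeight d σ ε₀ (y - x) := by
      refine integral_mono_ae hintd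
        ((rho_comp_integrable hd hσ hε x).const_mul _) ?_
      filter_upwards [fderiv_psi_le_ae hd hσ hq x ε] with y hy
      calc ‖fderiv ℝ (fun z => max (phi d σ ε₀ x z - ε) 0) y‖ ^ 2
          ≤ ‖fderiv ℝ (phi d σ ε₀ x) y‖ ^ 2 := pow_le_pow_left₀ (norm_nonneg _) hy 2
        _ ≤ ((d:ℝ)+ε₀)^2 * σ / 16 * rhoWeight d σ ε₀ (y - x) := fderiv_phi_sq_le hσ hq.le x y
    rwa [integral_const_mul, htrans] at h1
  set k := c * ∫ y, max (phi d σ ε₀ x y - ε) 0 ^ 2 with hkdef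
  by_cases hgint : Integrable
      (fun y => ‖fderiv ℝ (fun z => max (phi d σ ε₀ x z - ε) 0) y‖ ^ 2 + k)
  · have hconst : Integrable (fun _ : EuclideanSpace ℝ (Fin d) => k) := by
      have h2 := hgint.sub hintd
      have h3 : ((fun y => ‖fderiv ℝ (fun z => max (phi d σ ε₀ x z - ε) 0) y‖ ^ 2 + k)
          - fun y => ‖fderiv ℝ (fun z => max (phi d σ ε₀ x z - ε) 0) y‖ ^ 2)
          = fun _ : EuclideanSpace ℝ (Fin d) => k := by
        funext y; simp
      rwa [h3] at h2
    have hk0 : k = 0 := by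
      rcases integrable_const_iff.mp hconst with h | h
      · exact h
      · exfalso
        haveI : Nonempty (Fin d) := ⟨⟨0, hd⟩⟩
        haveI : Nontrivial (EuclideanSpace ℝ (Fin d)) := inferInstance
        haveI : NoncompactSpace (EuclideanSpace ℝ (Fin d)) :=
          NormedSpace.noncompactSpace ℝ (EuclideanSpace ℝ (Fin d))
        have h := measure_lt_top (volume : Measure (EuclideanSpace ℝ (Fin d))) Set.univ
        rw [measure_univ_of_isAddLeftInvariant] at h
        exact absurd h (by simp)
    calc ∫ y, ‖b y‖ ^ 2 * max (phi d σ ε₀ x y - ε) 0 ^ 2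
        ≤ δ * ∫ y, (‖fderiv ℝ (fun z => max (phi d σ ε₀ x z - ε) 0) y‖ ^ 2 + k) := h0
      _ = δ * ∫ y, ‖fderiv ℝ (fun z => max (phi d σ ε₀ x z - ε) 0) y‖ ^ 2 := by
          rw [hk0]; simp
      _ ≤ δ * ((((d:ℝ)+ε₀)^2 * σ / 16) * ∫ y, rhoWeight d σ ε₀ y) :=
          mul_le_mul_of_nonneg_left hgrad hδ
      _ ≤ (δ * ((d : ℝ) + ε₀) ^ 2 * σ / 16 + c) * ∫ y, rhoWeight d σ ε₀ y := by
          nlinarith [mul_nonneg hc hrhoint]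
  · rw [integral_undef hgint, mul_zero] at h0
    calc ∫ y, ‖b y‖ ^ 2 * max (phi d σ ε₀ x y - ε) 0 ^ 2 ≤ 0 := h0
      _ ≤ (δ * ((d : ℝ) + ε₀) ^ 2 * σ / 16 + c) * ∫ y, rhoWeight d σ ε₀ y := by positivity

end FB5

end Aux

open FB FB2 FB3 FB4 FB5

/-- Global weighted `L²` summability of a form-bounded vector field:
`∫ |b|² ρ_x ≤ (δ (d+ε₀)² σ / 16 + c) ∫ ρ < ∞`. -/
theorem form_bounded_global_weighted_L2
    (d : ℕ) (hd : 1 ≤ d) (σ ε₀ : ℝ) (hσ : 0 < σ) (hε : 0 < ε₀)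
    (δ c : ℝ) (hδ : 0 ≤ δ) (hc : 0 ≤ c)
    (b : EuclideanSpace ℝ (Fin d) → EuclideanSpace ℝ (Fin d))
    (hbloc : LocallyIntegrable (fun y => ‖b y‖ ^ 2) volume)
    (hfb : ∀ φ : EuclideanSpace ℝ (Fin d) → ℝ, IsTestFn φ →
      ∫ y, ‖b y‖ ^ 2 * φ y ^ 2 ≤
        δ * ∫ y, ‖fderiv ℝ φ y‖ ^ 2 + c * ∫ y, φ y ^ 2) :
    ∀ x : EuclideanSpace ℝ (Fin d),
      (∫⁻ y, ENNReal.ofReal (‖b y‖ ^ 2 * rhoWeight d σ ε₀ (y - x)))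
          ≤ ENNReal.ofReal (δ * ((d : ℝ) + ε₀) ^ 2 * σ / 16 + c) *
              ∫⁻ y, ENNReal.ofReal (rhoWeight d σ ε₀ y)
        ∧ ENNReal.ofReal (δ * ((d : ℝ) + ε₀) ^ 2 * σ / 16 + c) *
              (∫⁻ y, ENNReal.ofReal (rhoWeight d σ ε₀ y)) < ⊤ := by
  intro x
  have hq : 0 < (d:ℝ) + ε₀ := by
    have : (1:ℝ) ≤ (d:ℝ) := by exact_mod_cast hd
    linarith
  have hC : 0 ≤ δ * ((d : ℝ) + ε₀) ^ 2 * σ / 16 + c := by positivity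
  have hrho_int := rho_integrable (σ := σ) (ε₀ := ε₀) hd hσ hε
  have hlint_rho : ∫⁻ y, ENNReal.ofReal (rhoWeight d σ ε₀ y)
      = ENNReal.ofReal (∫ y, rhoWeight d σ ε₀ y) :=
    (ofReal_integral_eq_lintegral_ofReal hrho_int
      (Filter.Eventually.of_forall fun y => (rho_pos hσ y).le)).symm
  constructor
  · -- main bound
    have hbm : AEMeasurable (fun y : EuclideanSpace ℝ (Fin d) => ‖b y‖ ^ 2) :=
      hbloc.aestronglyMeasurable.aemeasurable
    have hmeasn : ∀ n : ℕ, AEMeasurable (fun y =>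
        ENNReal.ofReal (‖b y‖ ^ 2 * max (phi d σ ε₀ x y - 1/(n+1)) 0 ^ 2)) := fun n =>
      ENNReal.measurable_ofReal.comp_aemeasurable
        (hbm.mul (((psi_continuous hσ x (1/(n+1))).pow 2).measurable.aemeasurable))
    have hmono : ∀ᵐ y : EuclideanSpace ℝ (Fin d), Monotone fun n : ℕ =>
        ENNReal.ofReal (‖b y‖ ^ 2 * max (phi d σ ε₀ x y - 1/(n+1)) 0 ^ 2) := by
      refine Filter.Eventually.of_forall fun y n m hnm => ?_
      apply ENNReal.ofReal_le_ofReal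
      apply mul_le_mul_of_nonneg_left _ (sq_nonneg ‖b y‖)
      apply pow_le_pow_left₀ (psi_nonneg x _ y)
      apply max_le_max _ le_rfl
      apply sub_le_sub_left
      apply one_div_le_one_div_of_le (by positivity)
      have : (n:ℝ) ≤ (m:ℝ) := by exact_mod_cast hnm
      linarith
    have htend : ∀ᵐ y : EuclideanSpace ℝ (Fin d), Filter.Tendsto (fun n : ℕ =>
        ENNReal.ofReal (‖b y‖ ^ 2 * max (phi d σ ε₀ x y - 1/(n+1)) 0 ^ 2)) Filter.atTop
        (nhds (ENNReal.ofReal (‖b y‖ ^ 2 * rhoWeight d σ ε₀ (y - x)))) := by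
      refine Filter.Eventually.of_forall fun y => ?_
      have h1 : Filter.Tendsto (fun n : ℕ => (1:ℝ)/(n+1)) Filter.atTop (nhds 0) :=
        tendsto_one_div_add_atTop_nhds_zero_nat
      have h2 : Filter.Tendsto (fun n : ℕ => max (phi d σ ε₀ x y - 1/(n+1)) 0)
          Filter.atTop (nhds (phi d σ ε₀ x y)) := by
        have h3 := (tendsto_const_nhds (x := phi d σ ε₀ x y)
          (f := Filter.atTop (α := ℕ))).sub h1
        have h4 := h3.max (tendsto_const_nhds (x := (0:ℝ)))
        rw [sub_zero] at h4
        rwa [max_eq_left (phi_pos hσ x y).le] at h4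
      have h3 : Filter.Tendsto (fun n : ℕ => ‖b y‖ ^ 2 * max (phi d σ ε₀ x y - 1/(n+1)) 0 ^ 2)
          Filter.atTop (nhds (‖b y‖ ^ 2 * phi d σ ε₀ x y ^ 2)) :=
        tendsto_const_nhds.mul (h2.pow 2)
      rw [← phi_sq hσ x y]
      exact (ENNReal.continuous_ofReal.tendsto _).comp h3
    have hlim := lintegral_tendsto_of_tendsto_of_monotone hmeasn hmono htend
    refine le_of_tendsto hlim (Filter.Eventually.of_forall fun n => ?_)
    have hεn : 0 < (1:ℝ)/(n+1) := by positivity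
    have hint := b_psi_integrable hd hσ hε b hbloc x hεn
    have heq : ∫⁻ y, ENNReal.ofReal (‖b y‖ ^ 2 * max (phi d σ ε₀ x y - 1/(n+1)) 0 ^ 2)
        = ENNReal.ofReal (∫ y, ‖b y‖ ^ 2 * max (phi d σ ε₀ x y - 1/(n+1)) 0 ^ 2) :=
      (ofReal_integral_eq_lintegral_ofReal hint
        (Filter.Eventually.of_forall fun y => by positivity)).symm
    rw [heq, hlint_rho, ← ENNReal.ofReal_mul hC]
    exact ENNReal.ofReal_le_ofReal
      (key_bound hd hσ hε δ c hδ hc b hbloc (fun φ h => hfb φ h) x hεn)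
  · rw [hlint_rho, ← ENNReal.ofReal_mul hC]
    exact ENNReal.ofReal_lt_top

end
end

section
/- Let d ≥ 1, R > 0 and r > 0. There exist constants c ∈ (0,1] and C > 0, depending only on d, r and R, such that for every g ∈ C_c^∞(ℝ^d) with support contained in the ball B_R(0), every index 1 ≤ i ≤ d, every μ ≥ 1 and every x ∈ ℝ^d: (1 + |x|^r) · | ∫_0^∞ ∫_{ℝ^d} μ e^{−μ s} (4π s)^{−d/2} e^{−|x−y|²/(4s)} (∂_i g)(y) dy ds | ≤ C ∫_0^∞ ∫_{ℝ^d} μ e^{−c μ s} (4π s)^{−d/2} e^{−|x−y|²/(4s)} |(∂_i g)(y)| dy ds. -/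
open MeasureTheory

noncomputable section

open Real Set

lemma poly_le_exp (R r : ℝ) (hR : 0 < R) (hr : 0 < r) :
    ∃ M : ℝ, 1 ≤ M ∧ ∀ t : ℝ, 0 ≤ t → 1 + (t + R) ^ r ≤ M * Real.exp (t / 2) := by
  set n := ⌈r⌉₊ with hn
  refine ⟨1 + (R + 1) ^ r * 2 ^ n * (2 ^ n * (n.factorial : ℝ) + 1), ?_, ?_⟩
  · have h0 : (0:ℝ) ≤ (R + 1) ^ r * 2 ^ n * (2 ^ n * (n.factorial : ℝ) + 1) := by positivity
    linarith
  intro t ht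
  have hE : (1:ℝ) ≤ Real.exp (t / 2) := Real.one_le_exp (by linarith)
  have h1 : (t + R) ^ r ≤ (R + 1) ^ r * (t + 1) ^ r := by
    rw [← Real.mul_rpow (by positivity) (by positivity)]
    exact Real.rpow_le_rpow (by linarith) (by nlinarith) hr.le
  have h2 : (t + 1) ^ r ≤ (t + 1) ^ (n : ℕ) := by
    rw [← Real.rpow_natCast (t + 1) n]
    exact Real.rpow_le_rpow_of_exponent_le (by linarith) (Nat.le_ceil r)
  have h3 : (t + 1) ^ (n : ℕ) ≤ 2 ^ n * (t ^ n + 1) := by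
    calc (t + 1) ^ n ≤ (2 * max t 1) ^ n := by
          apply pow_le_pow_left₀ (by linarith)
          rcases le_total t 1 with h | h
          · rw [max_eq_right h]; linarith
          · rw [max_eq_left h]; linarith
      _ = 2 ^ n * (max t 1) ^ n := by rw [mul_pow]
      _ ≤ 2 ^ n * (t ^ n + 1) := by
          refine mul_le_mul_of_nonneg_left ?_ (by positivity)
          rcases le_total t 1 with h | h
          · rw [max_eq_right h, one_pow]; nlinarith [pow_nonneg ht n]
          · rw [max_eq_left h]; linarith
  have h4 : t ^ n ≤ 2 ^ n * (n.factorial : ℝ) * Real.exp (t / 2) := by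
    have hsum := Real.sum_le_exp_of_nonneg (by linarith : (0:ℝ) ≤ t / 2) (n + 1)
    have hterm : (t / 2) ^ n / (n.factorial : ℝ) ≤ Real.exp (t / 2) := by
      refine le_trans ?_ hsum
      exact Finset.single_le_sum (f := fun i => (t/2)^i / (i.factorial : ℝ))
        (fun i _ => by positivity) (Finset.self_mem_range_succ n)
    rw [div_pow, div_div] at hterm
    have h2n : (0:ℝ) < 2 ^ n * (n.factorial : ℝ) := by positivity
    calc t ^ n = (2 ^ n * (n.factorial : ℝ)) * (t ^ n / (2 ^ n * (n.factorial : ℝ))) := by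
          field_simp
      _ ≤ 2 ^ n * (n.factorial : ℝ) * Real.exp (t / 2) :=
          mul_le_mul_of_nonneg_left hterm h2n.le
  have hP : (0:ℝ) ≤ (R + 1) ^ r := by positivity
  have key : (t + R) ^ r ≤ (R + 1) ^ r * 2 ^ n * (2 ^ n * (n.factorial : ℝ) * Real.exp (t / 2) + 1) := by
    calc (t + R) ^ r ≤ (R + 1) ^ r * (t + 1) ^ r := h1
      _ ≤ (R + 1) ^ r * (2 ^ n * (t ^ n + 1)) :=
          mul_le_mul_of_nonneg_left (le_trans h2 h3) hP
      _ ≤ (R + 1) ^ r * (2 ^ n * (2 ^ n * (n.factorial : ℝ) * Real.exp (t / 2) + 1)) := by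
          refine mul_le_mul_of_nonneg_left (mul_le_mul_of_nonneg_left ?_ (by positivity)) hP
          linarith
      _ = (R + 1) ^ r * 2 ^ n * (2 ^ n * (n.factorial : ℝ) * Real.exp (t / 2) + 1) := by ring
  have h5 : (R + 1) ^ r * 2 ^ n * (2 ^ n * (n.factorial : ℝ) * Real.exp (t / 2) + 1)
      ≤ (R + 1) ^ r * 2 ^ n * ((2 ^ n * (n.factorial : ℝ) + 1) * Real.exp (t / 2)) := by
    refine mul_le_mul_of_nonneg_left ?_ (by positivity)
    nlinarith [hE]
  nlinarith [key, h5, hE, hP, mul_nonneg hP (by positivity : (0:ℝ) ≤ (2:ℝ) ^ n)]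

set_option maxHeartbeats 2000000 in
/-- Weighted pointwise bound on the resolvent of the Laplacian applied to a derivative of a
compactly supported smooth function, written via the heat kernel:
`(1+|x|^r) |μ(μ-Δ)⁻¹ ∂_i g (x)| ≤ C μ (cμ-Δ)⁻¹ |∂_i g| (x)` for all `μ ≥ 1`. -/
theorem heat_kernel_resolvent_weighted_bound
    (d : ℕ) (hd : 1 ≤ d) (R r : ℝ) (hR : 0 < R) (hr : 0 < r) :
    ∃ c C : ℝ, c ∈ Set.Ioc (0 : ℝ) 1 ∧ 0 < C ∧
      ∀ g : EuclideanSpace ℝ (Fin d) → ℝ,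
        ContDiff ℝ (⊤ : ℕ∞) g → HasCompactSupport g →
        tsupport g ⊆ Metric.ball (0 : EuclideanSpace ℝ (Fin d)) R →
        ∀ i : Fin d, ∀ μ : ℝ, 1 ≤ μ → ∀ x : EuclideanSpace ℝ (Fin d),
          (1 + ‖x‖ ^ r) *
            |∫ s in Set.Ioi (0 : ℝ), ∫ y : EuclideanSpace ℝ (Fin d),
                μ * Real.exp (-μ * s) * (4 * Real.pi * s) ^ (-(d : ℝ) / 2) *
                  Real.exp (-‖x - y‖ ^ 2 / (4 * s)) *
                  fderiv ℝ g y (EuclideanSpace.single i 1)|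
          ≤ C * ∫ s in Set.Ioi (0 : ℝ), ∫ y : EuclideanSpace ℝ (Fin d),
                μ * Real.exp (-(c * μ) * s) * (4 * Real.pi * s) ^ (-(d : ℝ) / 2) *
                  Real.exp (-‖x - y‖ ^ 2 / (4 * s)) *
                  |fderiv ℝ g y (EuclideanSpace.single i 1)| := by
  obtain ⟨M, hM1, hM⟩ := poly_le_exp R r hR hr
  have hπ : 0 < Real.pi := Real.pi_pos
  refine ⟨1/4, M * 2 ^ ((d:ℝ)/2) / 2, ⟨by norm_num, by norm_num⟩, by positivity, ?_⟩
  intro g hg hgcs hgsupp i μ hμ x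
  have hμ0 : 0 < μ := by linarith
  set f : EuclideanSpace ℝ (Fin d) → ℝ :=
    fun y => fderiv ℝ g y (EuclideanSpace.single i 1) with hfdef
  -- continuity of f
  have hfc : Continuous f :=
    (hg.continuous_fderiv (by simp)).clm_apply continuous_const
  -- support of f
  have hfsupp0 : Function.support f ⊆ tsupport g := by
    intro y hy
    by_contra hy'
    have h0 : fderiv ℝ g y = 0 := by
      by_contra h
      exact hy' (support_fderiv_subset ℝ (h : y ∈ Function.support (fderiv ℝ g)))
    simp [hfdef, h0] at hy
  have hfsupp : ∀ y : EuclideanSpace ℝ (Fin d), R ≤ ‖y‖ → f y = 0 := by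
    intro y hy
    by_contra h
    have : y ∈ Metric.ball (0 : EuclideanSpace ℝ (Fin d)) R :=
      hgsupp (hfsupp0 h)
    rw [Metric.mem_ball, dist_zero_right] at this
    linarith
  have hfcs : HasCompactSupport f := hgcs.mono' hfsupp0
  obtain ⟨y₀, hy₀⟩ := (hfc.abs).exists_forall_ge_of_hasCompactSupport (hfcs.abs)
  set K : ℝ := |f y₀| with hKdef
  have hK0 : 0 ≤ K := abs_nonneg _
  have hKb : ∀ y, |f y| ≤ K := hy₀
  -- kernels
  set P : ℝ → EuclideanSpace ℝ (Fin d) → ℝ := fun s y =>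
    μ * Real.exp (-μ * s) * (4 * Real.pi * s) ^ (-(d : ℝ) / 2) *
      Real.exp (-‖x - y‖ ^ 2 / (4 * s)) * f y with hPdef
  set Q : ℝ → EuclideanSpace ℝ (Fin d) → ℝ := fun s y =>
    μ * Real.exp (-(1/4 * μ) * s) * (4 * Real.pi * s) ^ (-(d : ℝ) / 2) *
      Real.exp (-‖x - y‖ ^ 2 / (4 * s)) * |f y| with hQdef
  show (1 + ‖x‖ ^ r) * |∫ s in Set.Ioi (0:ℝ), ∫ y, P s y|
      ≤ M * 2 ^ ((d:ℝ)/2) / 2 * ∫ s in Set.Ioi (0:ℝ), ∫ y, Q s y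
  -- Continuity in y facts
  have hEc : ∀ s : ℝ, Continuous fun y : EuclideanSpace ℝ (Fin d) =>
      Real.exp (-‖x - y‖ ^ 2 / (4 * s)) := by
    intro s
    exact Real.continuous_exp.comp
      (((((continuous_const.sub continuous_id).norm.pow 2).neg).div_const (4*s)))
  have hQc : ∀ s : ℝ, Continuous fun y => Q s y := by
    intro s
    exact (continuous_const.mul (hEc s)).mul hfc.abs
  have hQsupp : ∀ s : ℝ, Function.support (fun y => Q s y) ⊆ tsupport g := by
    intro s y hy
    apply hfsupp0
    intro h0
    apply hy
    simp [hQdef, h0]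
  have hQint : ∀ s : ℝ, Integrable (fun y => Q s y) := fun s =>
    (hQc s).integrable_of_hasCompactSupport (hgcs.mono' (hQsupp s))
  -- Gaussian integral facts
  have hGi : ∀ s : ℝ, 0 < s →
      Integrable (fun y : EuclideanSpace ℝ (Fin d) => Real.exp (-‖x - y‖ ^ 2 / (4 * s))) := by
    intro s hs
    have hb : (0:ℝ) < 1/(4*s) := by positivity
    have hc := (GaussianFourier.integrable_cexp_neg_mul_sq_norm_add
      (V := EuclideanSpace ℝ (Fin d)) (b := ((1/(4*s) : ℝ) : ℂ)) (by simpa using hb) 0 0).norm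
    have G0 : Integrable (fun z : EuclideanSpace ℝ (Fin d) => Real.exp (-(1/(4*s)) * ‖z‖^2)) := by
      refine hc.congr (Filter.Eventually.of_forall fun v => ?_)
      simp only [Complex.norm_exp]
      norm_num
      left
      rw [← Complex.ofReal_pow, Complex.ofReal_re]
    have heq : (fun y : EuclideanSpace ℝ (Fin d) => Real.exp (-‖x - y‖ ^ 2 / (4 * s)))
        = (fun y => Real.exp (-(1/(4*s)) * ‖y - x‖^2)) := by
      funext y
      rw [norm_sub_rev]
      congr 1
      ring
    rw [heq]
    exact G0.comp_sub_right x
  have hGv : ∀ s : ℝ, 0 < s →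
      (∫ y : EuclideanSpace ℝ (Fin d), Real.exp (-‖x - y‖ ^ 2 / (4 * s)))
        = (4 * Real.pi * s) ^ ((d : ℝ) / 2) := by
    intro s hs
    have hb : (0:ℝ) < 1/(4*s) := by positivity
    have heq : (fun y : EuclideanSpace ℝ (Fin d) => Real.exp (-‖x - y‖ ^ 2 / (4 * s)))
        = (fun y => Real.exp (-(1/(4*s)) * ‖y - x‖^2)) := by
      funext y; rw [norm_sub_rev]; congr 1; ring
    rw [heq, integral_sub_right_eq_self
      (fun z : EuclideanSpace ℝ (Fin d) => Real.exp (-(1/(4*s)) * ‖z‖^2)) x,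
      GaussianFourier.integral_rexp_neg_mul_sq_norm hb, finrank_euclideanSpace_fin]
    congr 1
    field_simp
  -- bound on the y-integral of Q
  have hIQnn : ∀ s : ℝ, 0 < s → 0 ≤ ∫ y, Q s y := by
    intro s hs
    exact integral_nonneg fun y => by positivity
  have hEfint : ∀ s : ℝ, Integrable (fun y => Real.exp (-‖x - y‖ ^ 2 / (4 * s)) * |f y|) := by
    intro s
    apply Continuous.integrable_of_hasCompactSupport ((hEc s).mul hfc.abs)
    apply hgcs.mono'
    intro y hy
    apply hfsupp0
    intro h0
    apply hy
    simp [h0]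
  have hIQ : ∀ s : ℝ, 0 < s → (∫ y, Q s y) ≤ μ * K * Real.exp (-(1/4 * μ) * s) := by
    intro s hs
    have hw : (4*Real.pi*s) ^ (-(d:ℝ)/2) * (4*Real.pi*s) ^ ((d:ℝ)/2) = 1 := by
      rw [← Real.rpow_add (by positivity), show -(d:ℝ)/2 + (d:ℝ)/2 = 0 by ring, Real.rpow_zero]
    have h1 : ∀ y, Q s y = (μ * Real.exp (-(1/4 * μ) * s) * (4*Real.pi*s) ^ (-(d:ℝ)/2))
        * (Real.exp (-‖x - y‖ ^ 2 / (4 * s)) * |f y|) := fun y => by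
      simp only [hQdef]; ring
    calc (∫ y, Q s y)
        = (μ * Real.exp (-(1/4 * μ) * s) * (4*Real.pi*s) ^ (-(d:ℝ)/2))
            * ∫ y, Real.exp (-‖x - y‖ ^ 2 / (4 * s)) * |f y| := by
          simp_rw [h1]; exact integral_const_mul _ _
      _ ≤ (μ * Real.exp (-(1/4 * μ) * s) * (4*Real.pi*s) ^ (-(d:ℝ)/2))
            * (K * (4 * Real.pi * s) ^ ((d:ℝ)/2)) := by
          refine mul_le_mul_of_nonneg_left ?_ (by positivity)
          calc (∫ y, Real.exp (-‖x - y‖ ^ 2 / (4 * s)) * |f y|)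
              ≤ ∫ y, Real.exp (-‖x - y‖ ^ 2 / (4 * s)) * K := by
                refine integral_mono (hEfint s) ((hGi s hs).mul_const K) fun y => ?_
                exact mul_le_mul_of_nonneg_left (hKb y) (Real.exp_nonneg _)
            _ = K * (4 * Real.pi * s) ^ ((d:ℝ)/2) := by
                rw [integral_mul_const, hGv s hs, mul_comm]
      _ = μ * K * Real.exp (-(1/4 * μ) * s)
            * ((4*Real.pi*s) ^ (-(d:ℝ)/2) * (4*Real.pi*s) ^ ((d:ℝ)/2)) := by ring
      _ = μ * K * Real.exp (-(1/4 * μ) * s) := by rw [hw, mul_one]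
  -- continuity of s ↦ ∫ y, Q s y on Ioi 0
  have hfint : Integrable (fun y => |f y|) :=
    (hfc.abs).integrable_of_hasCompactSupport (hfcs.abs)
  have hQcont : ContinuousOn (fun s => ∫ y, Q s y) (Ioi 0) := by
    intro s₀ hs₀
    have hs₀' : (0:ℝ) < s₀ := hs₀
    apply ContinuousAt.continuousWithinAt
    have hnb : Ioi (s₀/2) ∈ nhds s₀ := Ioi_mem_nhds (by linarith)
    refine continuousAt_of_dominated
      (bound := fun y => μ * (4 * Real.pi * (s₀/2)) ^ (-(d:ℝ)/2) * |f y|) ?_ ?_ ?_ ?_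
    · filter_upwards [hnb] with s _
      exact (hQc s).aestronglyMeasurable
    · filter_upwards [hnb] with s hs
      refine Filter.Eventually.of_forall fun y => ?_
      have hs' : 0 < s := lt_trans (by linarith) hs
      rw [Real.norm_eq_abs, abs_of_nonneg (by positivity)]
      have h1 : Real.exp (-(1/4 * μ) * s) ≤ 1 := Real.exp_le_one_iff.2 (by nlinarith)
      have h2 : Real.exp (-‖x - y‖ ^ 2 / (4 * s)) ≤ 1 :=
        Real.exp_le_one_iff.2 (by rw [neg_div, neg_nonpos]; positivity)
      have h3 : (4 * Real.pi * s) ^ (-(d:ℝ)/2) ≤ (4 * Real.pi * (s₀/2)) ^ (-(d:ℝ)/2) := by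
        rw [show (-(d:ℝ)/2) = -((d:ℝ)/2) by ring, Real.rpow_neg (by positivity),
          Real.rpow_neg (by positivity)]
        refine inv_anti₀ (Real.rpow_pos_of_pos (by positivity) _) ?_
        exact Real.rpow_le_rpow (by positivity) (by nlinarith [hπ, mem_Ioi.mp hs]) (by positivity)
      calc Q s y ≤ μ * 1 * ((4 * Real.pi * (s₀/2)) ^ (-(d:ℝ)/2)) * 1 * |f y| := by
            simp only [hQdef]
            gcongr
            all_goals first
              | exact h1
              | exact h2
              | exact h3
              | positivity
        _ = μ * (4 * Real.pi * (s₀/2)) ^ (-(d:ℝ)/2) * |f y| := by ring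
    · exact (hfint.const_mul _)
    · refine Filter.Eventually.of_forall fun y => ?_
      have c1 : ContinuousAt (fun s : ℝ => Real.exp (-(1/4 * μ) * s)) s₀ :=
        ((continuous_const.mul continuous_id).continuousAt).rexp
      have c2 : ContinuousAt (fun s : ℝ => (4 * Real.pi * s) ^ (-(d:ℝ)/2)) s₀ := by
        exact ContinuousAt.comp
          (Real.continuousAt_rpow_const (4 * Real.pi * s₀) (-(d:ℝ)/2)
            (Or.inl (by positivity : (0:ℝ) < 4 * Real.pi * s₀).ne'))
          ((continuous_const.mul continuous_id).continuousAt)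
      have c3 : ContinuousAt (fun s : ℝ => Real.exp (-‖x - y‖ ^ 2 / (4 * s))) s₀ := by
        have hd3 : ContinuousAt (fun s : ℝ => -‖x - y‖ ^ 2 / (4 * s)) s₀ :=
          ContinuousAt.div continuousAt_const
            ((continuous_const.mul continuous_id).continuousAt) (by positivity)
        exact hd3.rexp
      simp only [hQdef]
      exact ((((continuousAt_const.mul c1).mul c2).mul c3).mul continuousAt_const)
  -- integrability of s ↦ ∫ y, Q (2 s) y on Ioi 0
  have hQ2int : IntegrableOn (fun s => ∫ y, Q (2*s) y) (Ioi 0) := by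
    have hcont2 : ContinuousOn (fun s => ∫ y, Q (2*s) y) (Ioi 0) := by
      have heq : (fun s => ∫ y, Q (2*s) y) = (fun t => ∫ y, Q t y) ∘ (fun s : ℝ => 2*s) := rfl
      rw [heq]
      exact hQcont.comp ((continuous_const.mul continuous_id).continuousOn)
        (fun s hs => by simp only [mem_Ioi] at *; linarith)
    refine Integrable.mono' (g := fun s => (μ * K) * Real.exp (-(1/2 * μ) * s))
      ((exp_neg_integrableOn_Ioi 0 (show (0:ℝ) < 1/2 * μ by linarith)).const_mul (μ * K))
      (hcont2.aestronglyMeasurable measurableSet_Ioi) ?_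
    filter_upwards [ae_restrict_mem measurableSet_Ioi] with s hs
    have hs' : (0:ℝ) < s := hs
    have h2s : (0:ℝ) < 2*s := by linarith
    rw [Real.norm_eq_abs, abs_of_nonneg (hIQnn _ h2s)]
    calc (∫ y, Q (2*s) y) ≤ μ * K * Real.exp (-(1/4 * μ) * (2*s)) := hIQ _ h2s
      _ = μ * K * Real.exp (-(1/2 * μ) * s) := by
          congr 1
          ring
  -- substitution
  have hsub : (∫ s in Ioi (0:ℝ), ∫ y, Q (2*s) y) = (1/2) * ∫ s in Ioi (0:ℝ), ∫ y, Q s y := by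
    have h := integral_comp_mul_left_Ioi (fun s => ∫ y, Q s y) 0 (show (0:ℝ) < 2 by norm_num)
    simp only [mul_zero, smul_eq_mul] at h
    rw [h]; norm_num
  -- main pointwise (in s) step
  have hstep1 : ∀ s ∈ Ioi (0:ℝ),
      (1 + ‖x‖ ^ r) * |∫ y, P s y| ≤ M * 2 ^ ((d:ℝ)/2) * ∫ y, Q (2*s) y := by
    intro s hs
    have hs' : (0:ℝ) < s := hs
    have h2s : (0:ℝ) < 2*s := by linarith
    have hpt : ∀ y, (1 + ‖x‖ ^ r) * |P s y| ≤ M * 2 ^ ((d:ℝ)/2) * Q (2*s) y := by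
      intro y
      by_cases hfy : f y = 0
      · simp [hPdef, hQdef, hfy]
      · have hy : ‖y‖ < R := by
          by_contra h
          exact hfy (hfsupp y (le_of_not_gt h))
        have ha : (0:ℝ) ≤ ‖x - y‖ := norm_nonneg _
        have hxa : ‖x‖ ≤ ‖x - y‖ + R := by
          have h1 : ‖x‖ ≤ ‖x - y‖ + ‖y‖ := by
            simpa using norm_add_le (x - y) y
          linarith
        have hWb : 1 + ‖x‖ ^ r ≤ M * Real.exp (‖x - y‖ / 2) := by
          have h1 : ‖x‖ ^ r ≤ (‖x - y‖ + R) ^ r :=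
            Real.rpow_le_rpow (norm_nonneg x) hxa hr.le
          have h2 := hM ‖x - y‖ ha
          linarith
        have hexp : Real.exp (‖x - y‖ / 2) *
              (Real.exp (-μ * s) * Real.exp (-‖x - y‖ ^ 2 / (4 * s)))
            ≤ Real.exp (-μ * s / 2) * Real.exp (-‖x - y‖ ^ 2 / (8 * s)) := by
          rw [← Real.exp_add, ← Real.exp_add, ← Real.exp_add]
          apply Real.exp_le_exp.2
          have hA : ‖x - y‖ ≤ μ * s + ‖x - y‖ ^ 2 / (4 * s) := by
            rw [← sub_nonneg]
            have hq : μ * s + ‖x - y‖ ^ 2 / (4 * s) - ‖x - y‖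
                = (4 * μ * s ^ 2 + ‖x - y‖ ^ 2 - 4 * ‖x - y‖ * s) / (4 * s) := by
              field_simp
            rw [hq]
            apply div_nonneg _ (by linarith)
            nlinarith [sq_nonneg (2 * s - ‖x - y‖),
              mul_nonneg (sub_nonneg.2 hμ) (sq_nonneg s)]
          have h8 : -‖x - y‖ ^ 2 / (8 * s) = (-‖x - y‖ ^ 2 / (4 * s)) / 2 := by
            rw [div_div]
            ring_nf
          have h4 : -‖x - y‖ ^ 2 / (4 * s) = -(‖x - y‖ ^ 2 / (4 * s)) := by ring
          rw [h8, h4]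
          linarith
        have hcore : (1 + ‖x‖ ^ r) *
              (μ * Real.exp (-μ * s) * (4 * Real.pi * s) ^ (-(d:ℝ)/2) *
                Real.exp (-‖x - y‖ ^ 2 / (4 * s)))
            ≤ M * 2 ^ ((d:ℝ)/2) *
              (μ * Real.exp (-(1/4 * μ) * (2 * s)) * (4 * Real.pi * (2 * s)) ^ (-(d:ℝ)/2) *
                Real.exp (-‖x - y‖ ^ 2 / (4 * (2 * s)))) := by
          have hw : (4 * Real.pi * (2 * s)) ^ (-(d:ℝ)/2)
              = 2 ^ (-(d:ℝ)/2) * (4 * Real.pi * s) ^ (-(d:ℝ)/2) := by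
            rw [show (4 * Real.pi * (2 * s)) = 2 * (4 * Real.pi * s) by ring,
              Real.mul_rpow (by norm_num) (by positivity)]
          have h22 : (2:ℝ) ^ ((d:ℝ)/2) * 2 ^ (-(d:ℝ)/2) = 1 := by
            rw [← Real.rpow_add (by norm_num : (0:ℝ) < 2),
              show (d:ℝ)/2 + -(d:ℝ)/2 = 0 by ring, Real.rpow_zero]
          have hA4 : Real.exp (-(1/4 * μ) * (2 * s)) = Real.exp (-μ * s / 2) := by
            congr 1
            ring
          have hB8 : Real.exp (-‖x - y‖ ^ 2 / (4 * (2 * s)))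
              = Real.exp (-‖x - y‖ ^ 2 / (8 * s)) := by
            congr 1
            rw [show (4 * (2 * s)) = 8 * s by ring]
          rw [hw, hA4, hB8]
          calc (1 + ‖x‖ ^ r) *
                (μ * Real.exp (-μ * s) * (4 * Real.pi * s) ^ (-(d:ℝ)/2) *
                  Real.exp (-‖x - y‖ ^ 2 / (4 * s)))
              ≤ (M * Real.exp (‖x - y‖ / 2)) *
                (μ * Real.exp (-μ * s) * (4 * Real.pi * s) ^ (-(d:ℝ)/2) *
                  Real.exp (-‖x - y‖ ^ 2 / (4 * s))) :=
                mul_le_mul_of_nonneg_right hWb (by positivity)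
            _ = (M * (μ * (4 * Real.pi * s) ^ (-(d:ℝ)/2))) *
                (Real.exp (‖x - y‖ / 2) *
                  (Real.exp (-μ * s) * Real.exp (-‖x - y‖ ^ 2 / (4 * s)))) := by ring
            _ ≤ (M * (μ * (4 * Real.pi * s) ^ (-(d:ℝ)/2))) *
                (Real.exp (-μ * s / 2) * Real.exp (-‖x - y‖ ^ 2 / (8 * s))) :=
                mul_le_mul_of_nonneg_left hexp (by positivity)
            _ = M * 2 ^ ((d:ℝ)/2) *
                (μ * Real.exp (-μ * s / 2) *
                  (2 ^ (-(d:ℝ)/2) * (4 * Real.pi * s) ^ (-(d:ℝ)/2)) *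
                  Real.exp (-‖x - y‖ ^ 2 / (8 * s))) := by
                rw [show M * 2 ^ ((d:ℝ)/2) *
                    (μ * Real.exp (-μ * s / 2) *
                      (2 ^ (-(d:ℝ)/2) * (4 * Real.pi * s) ^ (-(d:ℝ)/2)) *
                      Real.exp (-‖x - y‖ ^ 2 / (8 * s)))
                  = (2 ^ ((d:ℝ)/2) * 2 ^ (-(d:ℝ)/2)) *
                    ((M * (μ * (4 * Real.pi * s) ^ (-(d:ℝ)/2))) *
                      (Real.exp (-μ * s / 2) * Real.exp (-‖x - y‖ ^ 2 / (8 * s)))) from by ring,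
                  h22, one_mul]
        have habs : |P s y| = μ * Real.exp (-μ * s) * (4 * Real.pi * s) ^ (-(d:ℝ)/2) *
            Real.exp (-‖x - y‖ ^ 2 / (4 * s)) * |f y| := by
          simp only [hPdef]
          rw [abs_mul]
          congr 1
          exact abs_of_nonneg (by positivity)
        rw [habs]
        calc (1 + ‖x‖ ^ r) * (μ * Real.exp (-μ * s) * (4 * Real.pi * s) ^ (-(d:ℝ)/2) *
              Real.exp (-‖x - y‖ ^ 2 / (4 * s)) * |f y|)
            = ((1 + ‖x‖ ^ r) * (μ * Real.exp (-μ * s) * (4 * Real.pi * s) ^ (-(d:ℝ)/2) *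
              Real.exp (-‖x - y‖ ^ 2 / (4 * s)))) * |f y| := by ring
          _ ≤ (M * 2 ^ ((d:ℝ)/2) *
              (μ * Real.exp (-(1/4 * μ) * (2 * s)) * (4 * Real.pi * (2 * s)) ^ (-(d:ℝ)/2) *
                Real.exp (-‖x - y‖ ^ 2 / (4 * (2 * s))))) * |f y| :=
              mul_le_mul_of_nonneg_right hcore (abs_nonneg _)
          _ = M * 2 ^ ((d:ℝ)/2) * Q (2*s) y := by
              simp only [hQdef]
              ring
    calc (1 + ‖x‖ ^ r) * |∫ y, P s y|
        ≤ (1 + ‖x‖ ^ r) * ∫ y, |P s y| := by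
          refine mul_le_mul_of_nonneg_left ?_ (by positivity)
          simpa [Real.norm_eq_abs] using norm_integral_le_integral_norm (fun y => P s y)
      _ = ∫ y, (1 + ‖x‖ ^ r) * |P s y| := (integral_const_mul _ _).symm
      _ ≤ ∫ y, M * 2 ^ ((d:ℝ)/2) * Q (2*s) y := by
          exact integral_mono_of_nonneg (Filter.Eventually.of_forall fun y => by positivity)
            ((hQint (2*s)).const_mul _) (Filter.Eventually.of_forall hpt)
      _ = M * 2 ^ ((d:ℝ)/2) * ∫ y, Q (2*s) y := integral_const_mul _ _
  -- assemble
  calc (1 + ‖x‖ ^ r) * |∫ s in Set.Ioi (0:ℝ), ∫ y, P s y|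
      ≤ (1 + ‖x‖ ^ r) * ∫ s in Set.Ioi (0:ℝ), |∫ y, P s y| := by
        refine mul_le_mul_of_nonneg_left ?_ (by positivity)
        simpa [Real.norm_eq_abs] using
          norm_integral_le_integral_norm (μ := volume.restrict (Ioi 0)) (fun s => ∫ y, P s y)
    _ = ∫ s in Set.Ioi (0:ℝ), (1 + ‖x‖ ^ r) * |∫ y, P s y| := (integral_const_mul _ _).symm
    _ ≤ ∫ s in Set.Ioi (0:ℝ), M * 2 ^ ((d:ℝ)/2) * ∫ y, Q (2*s) y := by
        refine integral_mono_of_nonneg (Filter.Eventually.of_forall fun s => by positivity)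
          (hQ2int.const_mul _) ?_
        filter_upwards [ae_restrict_mem measurableSet_Ioi] with s hs using hstep1 s hs
    _ = M * 2 ^ ((d:ℝ)/2) * ∫ s in Set.Ioi (0:ℝ), ∫ y, Q (2*s) y := integral_const_mul _ _
    _ = M * 2 ^ ((d:ℝ)/2) / 2 * ∫ s in Set.Ioi (0:ℝ), ∫ y, Q s y := by rw [hsub]; ring

end
end
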